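/- For each i ∈ {0,…,12}, the set P(i) = {(x,y) ∈ ℤ×ℤ : 4x + 7y ≡ i (mod 13)} is a perfect distance-2 dominating set of the infinite grid ℤ×ℤ: for every (a,b) ∈ ℤ×ℤ there is exactly one (x,y) ∈ P(i) with |a−x| + |b−y| ≤ 2. -/

import Mathlib

private lemma key15 (j : ZMod 13) :
    ∃! d : ℤ × ℤ, ((4 * d.1 + 7 * d.2 : ℤ) : ZMod 13) = j ∧ |d.1| + |d.2| ≤ 2 := by
  have huniq : ∀ d e : ℤ × ℤ,
      (((4 * d.1 + 7 * d.2 : ℤ) : ZMod 13) = j ∧ |d.1| + |d.2| ≤ 2) →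
      (((4 * e.1 + 7 * e.2 : ℤ) : ZMod 13) = j ∧ |e.1| + |e.2| ≤ 2) → d = e := by
    rintro ⟨d1, d2⟩ ⟨e1, e2⟩ ⟨h1, h2⟩ ⟨h3, h4⟩
    dsimp only at h1 h2 h3 h4
    have hz : ((4 * d1 + 7 * d2 - (4 * e1 + 7 * e2) : ℤ) : ZMod 13) = 0 := by
      push_cast
      push_cast at h1 h3
      linear_combination h1 - h3
    have hdvd : (13 : ℤ) ∣ (4 * d1 + 7 * d2 - (4 * e1 + 7 * e2)) := by
      exact_mod_cast (ZMod.intCast_zmod_eq_zero_iff_dvd _ 13).mp hz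
    have A1 : d1 + d2 ≤ 2 := le_trans (add_le_add (le_abs_self _) (le_abs_self _)) h2
    have A2 : d1 - d2 ≤ 2 := by
      have := add_le_add (le_abs_self d1) (neg_le_abs d2); linarith
    have A3 : -d1 + d2 ≤ 2 := le_trans (add_le_add (neg_le_abs _) (le_abs_self _)) h2
    have A4 : -d1 - d2 ≤ 2 := by
      have := add_le_add (neg_le_abs d1) (neg_le_abs d2); linarith
    have B1 : e1 + e2 ≤ 2 := le_trans (add_le_add (le_abs_self _) (le_abs_self _)) h4
    have B2 : e1 - e2 ≤ 2 := by
      have := add_le_add (le_abs_self e1) (neg_le_abs e2); linarith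
    have B3 : -e1 + e2 ≤ 2 := le_trans (add_le_add (neg_le_abs _) (le_abs_self _)) h4
    have B4 : -e1 - e2 ≤ 2 := by
      have := add_le_add (neg_le_abs e1) (neg_le_abs e2); linarith
    have l1 : -2 ≤ d1 := by linarith
    have l2 : d1 ≤ 2 := by linarith
    have l3 : -2 ≤ d2 := by linarith
    have l4 : d2 ≤ 2 := by linarith
    have l5 : -2 ≤ e1 := by linarith
    have l6 : e1 ≤ 2 := by linarith
    have l7 : -2 ≤ e2 := by linarith
    have l8 : e2 ≤ 2 := by linarith
    clear h1 h2 h3 h4 hz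
    have : d1 = e1 ∧ d2 = e2 := by
      interval_cases d1 <;> interval_cases d2 <;> interval_cases e1 <;>
        interval_cases e2 <;> omega
    simp [this.1, this.2]
  have hex : ∃ d : ℤ × ℤ, ((4 * d.1 + 7 * d.2 : ℤ) : ZMod 13) = j ∧ |d.1| + |d.2| ≤ 2 := by
    fin_cases j
    · exact ⟨(0, 0), by rfl, by decide⟩
    · exact ⟨(0, 2), by rfl, by decide⟩
    · exact ⟨(-1, -1), by rfl, by decide⟩
    · exact ⟨(-1, 1), by rfl, by decide⟩
    · exact ⟨(1, 0), by rfl, by decide⟩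
    · exact ⟨(-2, 0), by rfl, by decide⟩
    · exact ⟨(0, -1), by rfl, by decide⟩
    · exact ⟨(0, 1), by rfl, by decide⟩
    · exact ⟨(2, 0), by rfl, by decide⟩
    · exact ⟨(-1, 0), by rfl, by decide⟩
    · exact ⟨(1, -1), by rfl, by decide⟩
    · exact ⟨(1, 1), by rfl, by decide⟩
    · exact ⟨(0, -2), by rfl, by decide⟩
  obtain ⟨d, hd⟩ := hex
  exact ⟨d, hd, fun e he => huniq e d he hd⟩

theorem stmt15 (i : ZMod 13) (a b : ℤ) :
    ∃! p : ℤ × ℤ, ((4 * p.1 + 7 * p.2 : ℤ) : ZMod 13) = i ∧ |a - p.1| + |b - p.2| ≤ 2 := by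
  obtain ⟨d, ⟨hd1, hd2⟩, hu⟩ := key15 (i - ((4 * a + 7 * b : ℤ) : ZMod 13))
  refine ⟨(a + d.1, b + d.2), ⟨?_, ?_⟩, ?_⟩
  · push_cast
    push_cast at hd1
    linear_combination hd1
  · have e1 : a - (a + d.1) = -d.1 := by ring
    have e2 : b - (b + d.2) = -d.2 := by ring
    simpa [e1, e2, abs_neg] using hd2
  · rintro ⟨x, y⟩ ⟨h1, h2⟩
    have h := hu (x - a, y - b) ⟨by push_cast; push_cast at h1; linear_combination h1,
      by simpa [abs_sub_comm] using h2⟩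
    have hx : x - a = d.1 := congrArg Prod.fst h
    have hy : y - b = d.2 := congrArg Prod.snd h
    simp only [Prod.mk.injEq]
    omega
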